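/- Let C be a nonempty, closed and convex subset of a real Hilbert space H, let ε ≥ 0, let C_ε = {x ∈ H : d(x,C) ≤ ε}, and let x ∈ H \ C_ε. Then d(x,C) = d(x,C_ε) + ε. -/

import Mathlib

open Metric

/-- Let `C` be a nonempty, closed and convex subset of a real Hilbert space `H`, let `ε ≥ 0`,
let `Cε = {y : d(y,C) ≤ ε}` and let `x ∈ H \ Cε`.  Then `d(x,C) = d(x,Cε) + ε`. -/
theorem stmt1 {H : Type*} [NormedAddCommGroup H] [InnerProductSpace ℝ H] [CompleteSpace H]
    (C : Set H) (hCne : C.Nonempty) (hCcl : IsClosed C) (hCcv : Convex ℝ C)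
    (ε : ℝ) (hε : 0 ≤ ε)
    (x : H) (hx : x ∉ {y : H | infDist y C ≤ ε}) :
    infDist x C = infDist x {y : H | infDist y C ≤ ε} + ε := by
  have hset : {y : H | infDist y C ≤ ε} = cthickening ε C := by
    ext y
    rw [mem_cthickening_iff, Set.mem_setOf_eq]
    rw [infDist, ← ENNReal.le_ofReal_iff_toReal_le (infEdist_ne_top hCne) hε]
  have hxgt : ε < infDist x C := lt_of_not_ge hx
  have hle : ENNReal.ofReal ε ≤ infEDist x C :=
    ENNReal.ofReal_le_of_le_toReal hxgt.le
  have h1 : infEDist x (cthickening ε C) =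
      infEDist x C - ENNReal.ofReal ε := infEdist_cthickening ε C x
  have h2 : infDist x (cthickening ε C) = infDist x C - ε := by
    rw [infDist, h1, ENNReal.toReal_sub_of_le hle (infEdist_ne_top hCne),
      ENNReal.toReal_ofReal hε]
    rfl
  rw [hset, h2]
  ring
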